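/- arXiv:1807.08117 — 4 statements merged into one kernel-verified Lean document; each statement's English description precedes it below -/
import Mathlib

section
/- In the simple machine model, if u : μ → μ₁ (labeled m₁) and v : μ → μ₂ (labeled m₂) are two independent transitions from the same memory state μ, then there exists a unique memory state μ' such that m₂ is a valid transition from μ₁ to μ' and m₁ is a valid transition from μ₂ to μ' (existence and uniqueness of residuals / local confluence of independent transitions). -/
/-- Variable names. -/
abbrev Var := ℕ
/-- Memory locations. -/
abbrev Loc := ℕ
/-- Values (with `Loc ⊆ Val` via the canonical embedding `ℕ ⊆ ℤ`). -/
abbrev Val := ℤ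

/-- A memory state: a finite partial stack and a finite partial heap. -/
structure Mem where
  stack : Finmap (fun _ : Var => Val)
  heap : Finmap (fun _ : Loc => Val)

/-- The three instructions of the simple machine: `x := v`, `x := [ℓ]`, `[ℓ] := x`. -/
inductive Instr
  | assign (x : Var) (v : Val)
  | load (x : Var) (l : Loc)
  | store (l : Loc) (x : Var)

/-- Read footprint of an instruction, as a subset of `Var + Loc`. -/
def rdFP : Instr → Set (Var ⊕ Loc)
  | .assign _ _ => ∅
  | .load _ l => {Sum.inr l}
  | .store _ x => {Sum.inl x}

/-- Write footprint of an instruction, as a subset of `Var + Loc`. -/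
def wrFP : Instr → Set (Var ⊕ Loc)
  | .assign x _ => {Sum.inl x}
  | .load x _ => {Sum.inl x}
  | .store l _ => {Sum.inr l}

/-- Two transitions (identified by their instruction labels) are independent when
`(rd(u) ∪ wr(u)) ∩ wr(v) = ∅` and `wr(u) ∩ (rd(v) ∪ wr(v)) = ∅`. -/
def indep (m₁ m₂ : Instr) : Prop :=
  (rdFP m₁ ∪ wrFP m₁) ∩ wrFP m₂ = ∅ ∧ wrFP m₁ ∩ (rdFP m₂ ∪ wrFP m₂) = ∅

/-- The small-step transitions of the simple machine model. -/
inductive Step : Mem → Instr → Mem → Prop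
  | assign (s h x v) : Step ⟨s, h⟩ (.assign x v) ⟨s.insert x v, h⟩
  | load (s h x l v) : h.lookup l = some v → Step ⟨s, h⟩ (.load x l) ⟨s.insert x v, h⟩
  | store (s h l x v) : s.lookup x = some v → Step ⟨s, h⟩ (.store l x) ⟨s, h.insert l v⟩

lemma step_det {μ μ' μ'' : Mem} {m : Instr} (a : Step μ m μ') (b : Step μ m μ'') :
    μ' = μ'' := by
  cases a <;> cases b <;> simp_all

/-- Local confluence of independent transitions: if `u : μ →[m₁] μ₁` and
`v : μ →[m₂] μ₂` are independent, there is a unique memory state `μ'` with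
`μ₁ →[m₂] μ'` and `μ₂ →[m₁] μ'` (existence and uniqueness of residuals). -/
theorem stmt4 (μ μ₁ μ₂ : Mem) (m₁ m₂ : Instr)
    (h₁ : Step μ m₁ μ₁) (h₂ : Step μ m₂ μ₂) (h : indep m₁ m₂) :
    ∃! μ' : Mem, Step μ₁ m₂ μ' ∧ Step μ₂ m₁ μ' := by
  suffices hex : ∃ μ', Step μ₁ m₂ μ' ∧ Step μ₂ m₁ μ' by
    obtain ⟨μ', a, b⟩ := hex
    exact ⟨μ', ⟨a, b⟩, fun y hy => step_det hy.1 a⟩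
  cases h₁ with
  | assign s hp x₁ v₁ =>
    cases h₂ with
    | assign _ _ x₂ v₂ =>
      simp only [indep, rdFP, wrFP, Set.eq_empty_iff_forall_notMem, Set.mem_inter_iff,
        Set.mem_union, Set.mem_singleton_iff, Set.mem_empty_iff_false] at h
      have hne : x₁ ≠ x₂ := fun e => h.1 (.inl x₁) ⟨Or.inr rfl, e ▸ rfl⟩
      refine ⟨⟨(s.insert x₁ v₁).insert x₂ v₂, hp⟩, Step.assign .., ?_⟩
      rw [Finmap.insert_insert_of_ne _ hne]
      exact Step.assign ..
    | load _ _ x₂ l₂ v₂ hl =>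
      simp only [indep, rdFP, wrFP, Set.eq_empty_iff_forall_notMem, Set.mem_inter_iff,
        Set.mem_union, Set.mem_singleton_iff, Set.mem_empty_iff_false] at h
      have hne : x₁ ≠ x₂ := fun e => h.1 (.inl x₁) ⟨Or.inr rfl, e ▸ rfl⟩
      refine ⟨⟨(s.insert x₁ v₁).insert x₂ v₂, hp⟩, Step.load _ _ _ _ _ hl, ?_⟩
      rw [Finmap.insert_insert_of_ne _ hne]
      exact Step.assign ..
    | store _ _ l₂ x₂ v₂ hl =>
      simp only [indep, rdFP, wrFP, Set.eq_empty_iff_forall_notMem, Set.mem_inter_iff,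
        Set.mem_union, Set.mem_singleton_iff, Set.mem_empty_iff_false] at h
      have hne : x₂ ≠ x₁ := fun e => h.2 (.inl x₁) ⟨rfl, Or.inl (e ▸ rfl)⟩
      refine ⟨⟨s.insert x₁ v₁, hp.insert l₂ v₂⟩, ?_, Step.assign ..⟩
      exact Step.store _ _ _ _ _ (by rw [Finmap.lookup_insert_of_ne _ hne]; exact hl)
  | load s hp x₁ l₁ v₁ hl₁ =>
    cases h₂ with
    | assign _ _ x₂ v₂ =>
      simp only [indep, rdFP, wrFP, Set.eq_empty_iff_forall_notMem, Set.mem_inter_iff,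
        Set.mem_union, Set.mem_singleton_iff, Set.mem_empty_iff_false] at h
      have hne : x₁ ≠ x₂ := fun e => h.1 (.inl x₁) ⟨Or.inr rfl, e ▸ rfl⟩
      refine ⟨⟨(s.insert x₁ v₁).insert x₂ v₂, hp⟩, Step.assign .., ?_⟩
      rw [Finmap.insert_insert_of_ne _ hne]
      exact Step.load _ _ _ _ _ hl₁
    | load _ _ x₂ l₂ v₂ hl₂ =>
      simp only [indep, rdFP, wrFP, Set.eq_empty_iff_forall_notMem, Set.mem_inter_iff,
        Set.mem_union, Set.mem_singleton_iff, Set.mem_empty_iff_false] at h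
      have hne : x₁ ≠ x₂ := fun e => h.1 (.inl x₁) ⟨Or.inr rfl, e ▸ rfl⟩
      refine ⟨⟨(s.insert x₁ v₁).insert x₂ v₂, hp⟩, Step.load _ _ _ _ _ hl₂, ?_⟩
      rw [Finmap.insert_insert_of_ne _ hne]
      exact Step.load _ _ _ _ _ hl₁
    | store _ _ l₂ x₂ v₂ hl₂ =>
      simp only [indep, rdFP, wrFP, Set.eq_empty_iff_forall_notMem, Set.mem_inter_iff,
        Set.mem_union, Set.mem_singleton_iff, Set.mem_empty_iff_false] at h
      have hnx : x₂ ≠ x₁ := fun e => h.2 (.inl x₁) ⟨rfl, Or.inl (e ▸ rfl)⟩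
      have hnl : l₁ ≠ l₂ := fun e => h.1 (.inr l₁) ⟨Or.inl rfl, e ▸ rfl⟩
      refine ⟨⟨s.insert x₁ v₁, hp.insert l₂ v₂⟩, ?_, ?_⟩
      · exact Step.store _ _ _ _ _ (by rw [Finmap.lookup_insert_of_ne _ hnx]; exact hl₂)
      · exact Step.load _ _ _ _ _ (by rw [Finmap.lookup_insert_of_ne _ hnl]; exact hl₁)
  | store s hp l₁ x₁ v₁ hl₁ =>
    cases h₂ with
    | assign _ _ x₂ v₂ =>
      simp only [indep, rdFP, wrFP, Set.eq_empty_iff_forall_notMem, Set.mem_inter_iff,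
        Set.mem_union, Set.mem_singleton_iff, Set.mem_empty_iff_false] at h
      have hne : x₁ ≠ x₂ := fun e => h.1 (.inl x₁) ⟨Or.inl rfl, e ▸ rfl⟩
      refine ⟨⟨s.insert x₂ v₂, hp.insert l₁ v₁⟩, Step.assign .., ?_⟩
      exact Step.store _ _ _ _ _ (by rw [Finmap.lookup_insert_of_ne _ hne]; exact hl₁)
    | load _ _ x₂ l₂ v₂ hl₂ =>
      simp only [indep, rdFP, wrFP, Set.eq_empty_iff_forall_notMem, Set.mem_inter_iff,
        Set.mem_union, Set.mem_singleton_iff, Set.mem_empty_iff_false] at h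
      have hnx : x₁ ≠ x₂ := fun e => h.1 (.inl x₁) ⟨Or.inl rfl, e ▸ rfl⟩
      have hnl : l₂ ≠ l₁ := fun e => h.2 (.inr l₁) ⟨rfl, Or.inl (e ▸ rfl)⟩
      refine ⟨⟨s.insert x₂ v₂, hp.insert l₁ v₁⟩, ?_, ?_⟩
      · exact Step.load _ _ _ _ _ (by rw [Finmap.lookup_insert_of_ne _ hnl]; exact hl₂)
      · exact Step.store _ _ _ _ _ (by rw [Finmap.lookup_insert_of_ne _ hnx]; exact hl₁)
    | store _ _ l₂ x₂ v₂ hl₂ =>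
      simp only [indep, rdFP, wrFP, Set.eq_empty_iff_forall_notMem, Set.mem_inter_iff,
        Set.mem_union, Set.mem_singleton_iff, Set.mem_empty_iff_false] at h
      have hnl : l₁ ≠ l₂ := fun e => h.1 (.inr l₁) ⟨Or.inr rfl, e ▸ rfl⟩
      refine ⟨⟨s, (hp.insert l₁ v₁).insert l₂ v₂⟩, Step.store _ _ _ _ _ hl₂, ?_⟩
      rw [Finmap.insert_insert_of_ne _ hnl]
      exact Step.store _ _ _ _ _ hl₁
end

section
/- The simple machine model graph G of memory states with permutation tiles given by independent transitions and their residuals is an asynchronous graph: it satisfies the symmetry axiom and the axiom that u·w₁ ⋄ v₁·u₁ and u·w₂ ⋄ v₂·u₂ implies v₁ = v₂ iff w₁ = w₂. -/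
/-- A transition of the simple machine model graph `G`: a valid step together
with its source, instruction label and target. -/
structure MEdge where
  src : Mem
  instr : Instr
  tgt : Mem
  ok : Step src instr tgt

/-- Permutation tiles of the simple machine model: `u·v' ⋄ v·u'` holds when
`u` and `v` are independent transitions from the common source, `u'` is the
residual of `u` after `v` (same instruction, from the target of `v` to the
common target) and `v'` is the residual of `v` after `u`. -/
def MDiamond (u v' v u' : MEdge) : Prop :=
  u.src = v.src ∧ v'.src = u.tgt ∧ u'.src = v.tgt ∧ v'.tgt = u'.tgt ∧
  v'.instr = v.instr ∧ u'.instr = u.instr ∧ indep u.instr v.instr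

lemma step_det_s5 {m : Mem} {i : Instr} {t₁ t₂ : Mem}
    (h₁ : Step m i t₁) (h₂ : Step m i t₂) : t₁ = t₂ := by
  cases h₁ <;> cases h₂ <;> simp_all

lemma MEdge.ext' {a b : MEdge} (h₁ : a.src = b.src) (h₂ : a.instr = b.instr)
    (h₃ : a.tgt = b.tgt) : a = b := by
  cases a; cases b; cases h₁; cases h₂; cases h₃; rfl

lemma indep_symm {m₁ m₂ : Instr} (h : indep m₁ m₂) : indep m₂ m₁ := by
  obtain ⟨h1, h2⟩ := h
  constructor
  · rw [Set.inter_comm]; exact h2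
  · rw [Set.inter_comm]; exact h1

/-- The simple machine model, with permutation tiles given by independent
transitions and their residuals, is an asynchronous graph: the tile relation
is symmetric and satisfies the determinism axiom. -/
theorem stmt5 :
    (∀ u v' v u' : MEdge, MDiamond u v' v u' → MDiamond v u' u v') ∧
    (∀ u w₁ v₁ u₁ w₂ v₂ u₂ : MEdge,
      MDiamond u w₁ v₁ u₁ → MDiamond u w₂ v₂ u₂ → (v₁ = v₂ ↔ w₁ = w₂)) := by
  constructor
  · rintro u v' v u' ⟨h1, h2, h3, h4, h5, h6, h7⟩
    exact ⟨h1.symm, h3, h2, h4.symm, h6, h5, indep_symm h7⟩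
  · rintro u w₁ v₁ u₁ w₂ v₂ u₂ ⟨a1, a2, a3, a4, a5, a6, a7⟩ ⟨b1, b2, b3, b4, b5, b6, b7⟩
    constructor
    · rintro rfl
      refine MEdge.ext' (a2.trans b2.symm) (a5.trans b5.symm) ?_
      have hs : w₁.src = w₂.src := a2.trans b2.symm
      have hi : w₁.instr = w₂.instr := a5.trans b5.symm
      have := w₁.ok
      rw [hs, hi] at this
      exact step_det_s5 this w₂.ok
    · rintro rfl
      refine MEdge.ext' (a1.symm.trans b1) (a5.symm.trans b5) ?_
      -- v₁.tgt = u₁.src? no: v₁.tgt not directly given; use determinism of steps from u.src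
      have hs : v₁.src = v₂.src := a1.symm.trans b1
      have hi : v₁.instr = v₂.instr := a5.symm.trans b5
      have := v₁.ok
      rw [hs, hi] at this
      exact step_det_s5 this v₂.ok
end

section
/- The stateful-to-stateless map L from the simple machine model (G, ⋄_G) to (H, ⋄_H) is NOT a 2-fibration: there exists a path u·v' of length 2 in G and a permutation tile L(u)·L(v') ⋄_H b·a' in H which admits no lifting to a permutation tile u·v' ⋄_G v·u' in G with L(v) = b and L(u') = a'. (Witness: any path (x:=2)·(x:=3) in G and the tile in H permuting x:=2 and x:=3.) -/
/-- Tiles of the stateless graph `H`: `a·b' ⋄ b·a'` for every pair of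
instructions with `a = a'` and `b = b'`. -/
def HDiamond (u v' v u' : Instr) : Prop := u' = u ∧ v' = v

/-- The stateful-to-stateless map `L` (sending an edge to its instruction
label) is NOT a 2-fibration: there is a length-2 path `u · v'` in `G`
(executing `x := 2` then `x := 3`) and a permutation tile
`L(u)·L(v') ⋄_H b·a'` in `H` (permuting the two assignments) that admits no
lifting to a permutation tile `u·v' ⋄_G v·u'` in `G` with `L(v) = b` and
`L(u') = a'`. -/
theorem stmt7 (x : Var) :
    ∃ u v' : MEdge, u.tgt = v'.src ∧
      u.instr = Instr.assign x 2 ∧ v'.instr = Instr.assign x 3 ∧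
      HDiamond u.instr v'.instr v'.instr u.instr ∧
      ¬ ∃ v u' : MEdge, MDiamond u v' v u' ∧ v.instr = v'.instr ∧ u'.instr = u.instr := by
  refine ⟨⟨⟨∅, ∅⟩, _, _, Step.assign ∅ ∅ x 2⟩,
    ⟨_, _, _, Step.assign (Finmap.insert x 2 ∅) ∅ x 3⟩, rfl, rfl, rfl, ⟨rfl, rfl⟩, ?_⟩
  rintro ⟨v, u', ⟨-, -, -, -, hvi, -, hind⟩, hv, -⟩
  have h1 := hind.1
  rw [hv, hvi] at h1
  simp only [hv] at h1
  have : (Sum.inl x : Var ⊕ Loc) ∈ ((rdFP (Instr.assign x 2) ∪ wrFP (Instr.assign x 2)) ∩ wrFP (Instr.assign x 3)) := by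
    simp [rdFP, wrFP]
  rw [h1] at this
  exact this
end

section
/- In a tile of a three-party parallel product situation: given two tiles in asynchronous graphs over separated states whose upper paths are compatible (arise as the left and right subjective projections of a common path of three-party separated states), the lower paths of the two tiles are again compatible and hence define a path in the parallel product G₁ ∥ G₂. -/
/-- A partial cancellative commutative monoid of permissions. -/
structure PCM where
  P : Type
  mul : P → P → Option P
  mul_comm : ∀ a b, mul a b = mul b a
  mul_assoc : ∀ a b c, (mul a b).bind (fun d => mul d c) = (mul b c).bind (fun d => mul a d)
  cancel : ∀ a b c d, mul a b = some d → mul a c = some d → b = c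

/-- A logical state: a partial function from addresses (`Var + Loc`) to pairs
of a value and a permission. -/
def LogState (A Val : Type) (M : PCM) := A → Option (Val × M.P)

/-- The separation product `σ * σ'` is defined when at every common point the
two states carry the same value and the product of the permissions is
defined. -/
def SepDefined {A Val : Type} {M : PCM} (σ σ' : LogState A Val M) : Prop :=
  ∀ a v p w q, σ a = some (v, p) → σ' a = some (w, q) → v = w ∧ (M.mul p q).isSome

/-- Pointwise value of the separation product. -/
def sepAt {A Val : Type} {M : PCM} (σ σ' : LogState A Val M) (a : A) :
    Option (Val × M.P) :=
  match σ a, σ' a with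
  | some (v, p), some (_, q) => (M.mul p q).map (fun r => (v, r))
  | some vp, none => some vp
  | none, o => o

/-- The (partial) separation product of logical states. -/
noncomputable def sep {A Val : Type} {M : PCM} (σ σ' : LogState A Val M) :
    Option (LogState A Val M) :=
  haveI : Decidable (SepDefined σ σ') := Classical.propDecidable _
  if SepDefined σ σ' then some (fun a => sepAt σ σ' a) else none

/-- The empty logical state (unit of the separation product). -/
def emptyLS {A Val : Type} {M : PCM} : LogState A Val M := fun _ => none

/-- Iterated (partial) separation product of a list of logical states. -/
noncomputable def bigSep {A Val : Type} {M : PCM} (l : List (LogState A Val M)) :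
    Option (LogState A Val M) :=
  l.foldr (fun σ o => o.bind (fun τ => sep σ τ)) (some emptyLS)

/-- The combined logical state `σ_C * (∗_{r ∈ dom σ⃗} σ⃗(r)) * σ_F` of a
separated state, when defined. Here `Sum.inr true` stands for a lock held by
the Code and `Sum.inr false` for a lock held by the Frame. -/
noncomputable def combine? {A Val L : Type} [Fintype L] {M : PCM}
    (σC : LogState A Val M) (f : L → LogState A Val M ⊕ Bool)
    (σF : LogState A Val M) : Option (LogState A Val M) :=
  (bigSep ((Finset.univ : Finset L).toList.filterMap (fun r => (f r).getLeft?))).bind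
    (fun mid => (sep σC mid).bind (fun t => sep t σF))

/-- Permission erasure, sending a logical state to its underlying memory state. -/
def eraseP {A Val : Type} {M : PCM} (σ : LogState A Val M) : A → Option Val :=
  fun a => (σ a).map Prod.fst

/-- A footprint over addresses `A` and locks `L`: read/write areas, touched
locks, allocated/deallocated addresses. -/
structure SFootprint (A L : Type) where
  rd : Set A
  wr : Set A
  lock : Set L
  alloc : Set A

/-- Independence of footprints. -/
def SFIndep {A L : Type} (ρ ρ' : SFootprint A L) : Prop :=
  (ρ.rd ∪ ρ.wr) ∩ ρ'.wr = ∅ ∧ (ρ'.rd ∪ ρ'.wr) ∩ ρ.wr = ∅ ∧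
  ρ.lock ∩ ρ'.lock = ∅ ∧ ρ.alloc ∩ ρ'.alloc = ∅

/-- A separated state candidate `(σ_C, σ⃗, σ_F)`: Code state, lock states
(`Sum.inr true` = held by Code, `Sum.inr false` = held by Frame), Frame state. -/
def SepTriple (A Val L : Type) (M : PCM) : Type :=
  LogState A Val M × (L → LogState A Val M ⊕ Bool) × LogState A Val M

/-- The separated state `x` combines into the machine state `ms = (μ, L)`. -/
def CombinesTo {A Val L : Type} [Fintype L] {M : PCM}
    (x : SepTriple A Val L M) (ms : (A → Option Val) × Set L) : Prop :=
  ∃ τ, combine? x.1 x.2.1 x.2.2 = some τ ∧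
    ms = (eraseP τ, {r | x.2.1 r = Sum.inr true} ∪ {r | x.2.1 r = Sum.inr false})

/-- Eve (Code) transitions of the machine model of separated states, relative
to an abstract instruction set `I` with footprints `fp` and machine-step
relation `mstep` on machine states: the Frame component is unchanged, the
combined machine states are related by the instruction, the Code component is
unchanged outside the write area, the read and write areas lie in the domain
of the Code component, the touched locks are free or held by the Code, and
the lock states are unchanged outside the touched locks. -/
def EveStep {A Val L I : Type} [Fintype L] {M : PCM}
    (fp : I → SFootprint A L)
    (mstep : I → ((A → Option Val) × Set L) → ((A → Option Val) × Set L) → Prop)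
    (m : I) (x y : SepTriple A Val L M) : Prop :=
  x.2.2 = y.2.2 ∧
  (∃ ms ms', CombinesTo x ms ∧ CombinesTo y ms' ∧ mstep m ms ms') ∧
  (∀ a, a ∉ (fp m).wr → x.1 a = y.1 a) ∧
  ((fp m).wr ∪ (fp m).rd ⊆ {a | (x.1 a).isSome}) ∧
  ((fp m).lock ⊆ {r | (x.2.1 r).isLeft = true ∨ x.2.1 r = Sum.inr true}) ∧
  (∀ r, r ∉ (fp m).lock → x.2.1 r = y.2.1 r)

/-- Adam (Frame) transitions of the machine model of separated states: dual to
Eve transitions, with the Code component unchanged. -/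
def AdamStep {A Val L I : Type} [Fintype L] {M : PCM}
    (fp : I → SFootprint A L)
    (mstep : I → ((A → Option Val) × Set L) → ((A → Option Val) × Set L) → Prop)
    (m : I) (x y : SepTriple A Val L M) : Prop :=
  x.1 = y.1 ∧
  (∃ ms ms', CombinesTo x ms ∧ CombinesTo y ms' ∧ mstep m ms ms') ∧
  (∀ a, a ∉ (fp m).wr → x.2.2 a = y.2.2 a) ∧
  ((fp m).wr ∪ (fp m).rd ⊆ {a | (x.2.2 a).isSome}) ∧
  ((fp m).lock ⊆ {r | (x.2.1 r).isLeft = true ∨ x.2.1 r = Sum.inr false}) ∧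
  (∀ r, r ∉ (fp m).lock → x.2.1 r = y.2.1 r)

/-- Ownership marks of a three-party separated state: Code 1, Code 2, Frame. -/
inductive Own3
  | c1
  | c2
  | fr

/-- A three-party separated state candidate `(σ₁, σ₂, σ⃗*, σ_F)`. -/
def ThreeTriple (A Val L : Type) (M : PCM) : Type :=
  LogState A Val M × LogState A Val M ×
    (L → LogState A Val M ⊕ Own3) × LogState A Val M

/-- The combined logical state `σ₁ * σ₂ * (∗_r σ⃗*(r)) * σ_F` of a three-party
separated state, when defined. -/
noncomputable def combine3? {A Val L : Type} [Fintype L] {M : PCM}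
    (y : ThreeTriple A Val L M) : Option (LogState A Val M) :=
  (bigSep ((Finset.univ : Finset L).toList.filterMap
      (fun r => (y.2.2.1 r).getLeft?))).bind
    (fun mid => (sep y.1 y.2.1).bind
      (fun s => (sep s mid).bind (fun t => sep t y.2.2.2)))

/-- Lock-state relabeling for the left subjective projection: `C₁ ↦ C`,
`C₂ ↦ F`, `F ↦ F`. -/
def remap1 {A Val : Type} {M : PCM} :
    LogState A Val M ⊕ Own3 → LogState A Val M ⊕ Bool
  | .inl σ => .inl σ
  | .inr .c1 => .inr true
  | .inr _ => .inr false

/-- Lock-state relabeling for the right subjective projection: `C₂ ↦ C`,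
`C₁ ↦ F`, `F ↦ F`. -/
def remap2 {A Val : Type} {M : PCM} :
    LogState A Val M ⊕ Own3 → LogState A Val M ⊕ Bool
  | .inl σ => .inl σ
  | .inr .c2 => .inr true
  | .inr _ => .inr false

/-- `x` is the left subjective projection `λ₁(y)`:
`x = (σ₁, σ⃗*[C₁↦C, C₂↦F], σ_F * σ₂)`. -/
def Proj1 {A Val L : Type} {M : PCM}
    (y : ThreeTriple A Val L M) (x : SepTriple A Val L M) : Prop :=
  x.1 = y.1 ∧ x.2.1 = (fun r => remap1 (y.2.2.1 r)) ∧ sep y.2.2.2 y.2.1 = some x.2.2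

/-- `x` is the right subjective projection `λ₂(y)`:
`x = (σ₂, σ⃗*[C₁↦F, C₂↦C], σ_F * σ₁)`. -/
def Proj2 {A Val L : Type} {M : PCM}
    (y : ThreeTriple A Val L M) (x : SepTriple A Val L M) : Prop :=
  x.1 = y.2.1 ∧ x.2.1 = (fun r => remap2 (y.2.2.1 r)) ∧ sep y.2.2.2 y.1 = some x.2.2

/-- Two separated states are compatible when they are the two subjective
projections of a common (well-defined) three-party separated state. -/
def Compatible {A Val L : Type} [Fintype L] {M : PCM}
    (x₁ x₂ : SepTriple A Val L M) : Prop :=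
  ∃ y : ThreeTriple A Val L M,
    (combine3? y).isSome ∧ Proj1 y x₁ ∧ Proj2 y x₂

/-- A move of given polarity (`true` = Eve/Code, `false` = Adam/Frame). -/
def Move {A Val L I : Type} [Fintype L] {M : PCM}
    (fp : I → SFootprint A L)
    (mstep : I → ((A → Option Val) × Set L) → ((A → Option Val) × Set L) → Prop)
    (pol : Bool) (m : I) (x y : SepTriple A Val L M) : Prop :=
  if pol then EveStep fp mstep m x y else AdamStep fp mstep m x y

/-- A permutation tile over the machine model of separated states: the square
`x → y → z  ⋄  x → y' → z` where the two instructions have independent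
footprints and opposite sides carry the same instruction and polarity. -/
def STile {A Val L I : Type} [Fintype L] {M : PCM}
    (fp : I → SFootprint A L)
    (mstep : I → ((A → Option Val) × Set L) → ((A → Option Val) × Set L) → Prop)
    (pol pol' : Bool) (m m' : I) (x y z y' : SepTriple A Val L M) : Prop :=
  Move fp mstep pol m x y ∧ Move fp mstep pol' m' y z ∧
  Move fp mstep pol' m' x y' ∧ Move fp mstep pol m y' z ∧
  SFIndep (fp m) (fp m')

/-! ### Auxiliary pointwise theory of the separation product -/

section Aux

open Classical

variable {A Val L : Type} {M : PCM}

/-- The total commutative monoid of "cells with undefinedness":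
`none` = undefined product, `some none` = empty cell (unit). -/
abbrev TT (Val : Type) (M : PCM) : Type := Option (Option (Val × M.P))

/-- Pointwise separation product value (mirror of the body of `sepAt`). -/
def lSep (c d : Option (Val × M.P)) : Option (Val × M.P) :=
  match c, d with
  | some (v, p), some (_, q) => (M.mul p q).map (fun r => (v, r))
  | some vp, none => some vp
  | none, o => o

/-- Pointwise definedness condition of the separation product. -/
def lDef (c d : Option (Val × M.P)) : Prop :=
  ∀ v p w q, c = some (v, p) → d = some (w, q) → v = w ∧ (M.mul p q).isSome

/-- Partial product of two cells. -/
noncomputable def cmul (c d : Option (Val × M.P)) : TT Val M :=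
  match c, d with
  | none, d => some d
  | some c, none => some (some c)
  | some (v, p), some (w, q) =>
      if v = w then (M.mul p q).map (fun r => some (v, r)) else none

/-- Product on `TT`, with `none` absorbing. -/
noncomputable def tmul (x y : TT Val M) : TT Val M :=
  Option.bind x fun c => Option.bind y fun d => cmul c d

lemma tmul_some_some (c d : Option (Val × M.P)) :
    tmul (some c) (some d) = cmul c d := rfl

lemma tmul_none_left (y : TT Val M) : tmul none y = none := rfl

lemma tmul_none_right (x : TT Val M) : tmul x none = none := by
  cases x <;> rfl

lemma cmul_none_left (d : Option (Val × M.P)) : cmul none d = some d := rfl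

lemma cmul_none_right (c : Option (Val × M.P)) : cmul c none = some c := by
  rcases c with _ | c <;> rfl

lemma cmul_ss {v w : Val} {p q : M.P} :
    cmul (some (v, p)) (some (w, q))
      = if v = w then (M.mul p q).map (fun r => some (v, r)) else none := rfl

lemma cmul_of_lDef {c d : Option (Val × M.P)} (h : lDef c d) :
    cmul c d = some (lSep c d) := by
  rcases c with _ | ⟨v, p⟩ <;> rcases d with _ | ⟨w, q⟩
  · rfl
  · rfl
  · rfl
  · obtain ⟨rfl, hs⟩ := h v p w q rfl rfl
    obtain ⟨r, hr⟩ := Option.isSome_iff_exists.mp hs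
    simp [cmul_ss, lSep, hr]

lemma lDef_of_cmul {c d : Option (Val × M.P)} {e : Option (Val × M.P)}
    (h : cmul c d = some e) : lDef c d ∧ e = lSep c d := by
  rcases c with _ | ⟨v, p⟩ <;> rcases d with _ | ⟨w, q⟩
  · constructor
    · intro v p w q h1 h2; cases h1
    · injection h with h; rw [← h]; rfl
  · constructor
    · intro v p w q h1 h2; cases h1
    · injection h with h; rw [← h]; rfl
  · constructor
    · intro v' p' w q h1 h2; cases h2
    · injection h with h; rw [← h]; rfl
  · rw [cmul_ss] at h
    by_cases hvw : v = w
    · subst hvw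
      rw [if_pos rfl] at h
      rcases h1 : M.mul p q with _ | r
      · rw [h1] at h; cases h
      · rw [h1] at h
        injection h with h
        refine ⟨fun v' p' w' q' hv hw => ?_, ?_⟩
        · cases hv; cases hw; exact ⟨rfl, by simp [h1]⟩
        · rw [← h]; show _ = lSep _ _; rw [lSep, h1]; rfl
    · rw [if_neg hvw] at h; cases h

lemma cmul_comm (c d : Option (Val × M.P)) : cmul c d = cmul d c := by
  rcases c with _ | ⟨v, p⟩ <;> rcases d with _ | ⟨w, q⟩
  · rfl
  · rfl
  · rfl
  · rw [cmul_ss, cmul_ss, M.mul_comm p q]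
    by_cases h : v = w
    · subst h; rfl
    · rw [if_neg h, if_neg fun e => h e.symm]

lemma tmul_comm (x y : TT Val M) : tmul x y = tmul y x := by
  rcases x with _ | c <;> rcases y with _ | d
  · rfl
  · rfl
  · rfl
  · rw [tmul_some_some, tmul_some_some, cmul_comm]

lemma tmul_some_cmul (c : Option (Val × M.P)) (Y : TT Val M) :
    tmul (some c) Y = Option.bind Y (fun d => cmul c d) := rfl

lemma tmul_assoc (x y z : TT Val M) : tmul (tmul x y) z = tmul x (tmul y z) := by
  rcases x with _ | c
  · rfl
  rcases y with _ | d
  · rfl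
  rcases z with _ | e
  · rw [tmul_none_right, tmul_none_right, tmul_none_right]
  rw [tmul_some_some, tmul_some_some]
  rcases c with _ | ⟨v, p⟩
  · rw [cmul_none_left, tmul_some_some]
    rcases h : cmul d e with _ | f
    · rw [tmul_none_right]
    · rw [tmul_some_some, cmul_none_left]
  rcases d with _ | ⟨w, q⟩
  · rw [cmul_none_right, cmul_none_left, tmul_some_some]
  rcases e with _ | ⟨u, r⟩
  · rw [cmul_none_right, tmul_some_some]
    rcases h : cmul (some (v, p)) (some (w, q)) with _ | f
    · rw [tmul_none_left]
    · rw [tmul_some_some, cmul_none_right]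
  -- the genuine case
  have hA := M.mul_assoc p q r
  rw [cmul_ss, cmul_ss]
  by_cases hvw : v = w
  · subst hvw
    rw [if_pos rfl]
    by_cases hvu : v = u
    · subst hvu
      rw [if_pos rfl]
      rcases h1 : M.mul p q with _ | t <;> rcases h2 : M.mul q r with _ | s <;>
        rw [h1, h2] at hA <;>
        simp only [Option.bind_none, Option.bind_some] at hA
      · simp [tmul_none_left, tmul_none_right]
      · simp [tmul_some_some, cmul_ss, tmul_none_left, tmul_none_right, ← hA]
      · simp [tmul_some_some, cmul_ss, tmul_none_left, tmul_none_right, hA]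
      · simp [tmul_some_some, cmul_ss, tmul_none_left, tmul_none_right, hA]
    · rw [if_neg hvu]
      rcases h1 : M.mul p q with _ | t
      · simp [tmul_none_left, tmul_none_right]
      · simp [tmul_some_some, cmul_ss, hvu, tmul_none_right]
  · rw [if_neg hvw]
    rw [tmul_none_left]
    by_cases hwu : w = u
    · subst hwu
      rw [if_pos rfl]
      rcases h2 : M.mul q r with _ | s
      · simp [tmul_none_right]
      · simp [tmul_some_some, cmul_ss, hvw]
    · rw [if_neg hwu, tmul_none_right]

noncomputable instance : CommMonoid (TT Val M) where
  mul := tmul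
  one := some none
  mul_assoc := tmul_assoc
  mul_comm := tmul_comm
  one_mul x := by rcases x with _ | c <;> rfl
  mul_one x := by
    rcases x with _ | c
    · rfl
    · show cmul c none = some c
      rcases c with _ | c' <;> rfl

lemma TT.mul_def (x y : TT Val M) : x * y = tmul x y := rfl

lemma TT.one_def : (1 : TT Val M) = some none := rfl

lemma TT.mul_some_some (c d : Option (Val × M.P)) :
    (some c : TT Val M) * some d = cmul c d := rfl

lemma TT.eq_some_left {x y : TT Val M} {c : Option (Val × M.P)}
    (h : x * y = some c) : x = some (Option.join x) := by
  rcases x with _ | cx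
  · rw [TT.mul_def, tmul_none_left] at h; cases h
  · rfl

lemma TT.eq_some_right {x y : TT Val M} {c : Option (Val × M.P)}
    (h : x * y = some c) : y = some (Option.join y) := by
  rcases y with _ | cy
  · rw [TT.mul_def, tmul_none_right] at h; cases h
  · rfl

/-! #### Relating `sep`, `bigSep`, `combine?`, `combine3?` to `TT` -/

lemma sep_pos {σ σ' : LogState A Val M} (h : SepDefined σ σ') :
    sep σ σ' = some (fun a => sepAt σ σ' a) := by
  simp only [sep]
  exact if_pos h

lemma sep_neg {σ σ' : LogState A Val M} (h : ¬ SepDefined σ σ') :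
    sep σ σ' = none := by
  simp only [sep]
  exact if_neg h

lemma sepAt_eq (σ σ' : LogState A Val M) (a : A) :
    sepAt σ σ' a = lSep (σ a) (σ' a) := rfl

lemma sep_eq_some_iff {σ σ' τ : LogState A Val M} :
    sep σ σ' = some τ ↔
      ∀ a, (some (σ a) : TT Val M) * some (σ' a) = some (τ a) := by
  constructor
  · intro h a
    have hd : SepDefined σ σ' := by
      by_contra hnd
      rw [sep_neg hnd] at h
      cases h
    rw [sep_pos hd] at h
    injection h with h
    rw [TT.mul_some_some, cmul_of_lDef (fun v p w q h1 h2 => hd a v p w q h1 h2)]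
    rw [← h]
    rfl
  · intro h
    have hd : SepDefined σ σ' := by
      intro a v p w q h1 h2
      exact (lDef_of_cmul (h a)).1 v p w q h1 h2
    rw [sep_pos hd]
    congr 1
    funext a
    rw [sepAt_eq, (lDef_of_cmul (h a)).2]

/-- Pointwise product of a list of logical states at an address. -/
noncomputable def listProdAt (l : List (LogState A Val M)) (a : A) : TT Val M :=
  (l.map fun σ => (some (σ a) : TT Val M)).prod

lemma listProdAt_nil (a : A) : listProdAt ([] : List (LogState A Val M)) a = 1 := rfl

lemma listProdAt_cons (σ : LogState A Val M) (l : List (LogState A Val M)) (a : A) :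
    listProdAt (σ :: l) a = (some (σ a) : TT Val M) * listProdAt l a := by
  simp [listProdAt]

lemma bigSep_eq_some_iff {l : List (LogState A Val M)} {τ : LogState A Val M} :
    bigSep l = some τ ↔ ∀ a, listProdAt l a = some (τ a) := by
  induction l generalizing τ with
  | nil =>
    constructor
    · intro h a
      injection h with h
      rw [listProdAt_nil, TT.one_def, ← h]
      rfl
    · intro h
      have : τ = emptyLS := by
        funext a
        have := h a
        rw [listProdAt_nil, TT.one_def] at this
        injection this with this
        exact this.symm
      rw [this]; rfl
  | cons σ l ih =>
    have hrw : bigSep (σ :: l) = (bigSep l).bind (fun t => sep σ t) := rfl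
    rw [hrw]
    constructor
    · intro h a
      obtain ⟨t, ht, hs⟩ := Option.bind_eq_some_iff.mp h
      rw [listProdAt_cons, (ih.mp ht) a]
      exact sep_eq_some_iff.mp hs a
    · intro h
      have hne : ∀ a, listProdAt l a = some (Option.join (listProdAt l a)) := by
        intro a
        have ha := h a
        rw [listProdAt_cons] at ha
        exact TT.eq_some_right ha
      have hl : bigSep l = some (fun a => Option.join (listProdAt l a)) :=
        ih.mpr hne
      rw [hl]
      refine Option.bind_eq_some_iff.mpr ⟨_, rfl, ?_⟩
      apply sep_eq_some_iff.mpr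
      intro a
      have ha := h a
      rw [listProdAt_cons, hne a] at ha
      exact ha

lemma combine?_eq_some_iff {L : Type} [Fintype L] {σC : LogState A Val M}
    {f : L → LogState A Val M ⊕ Bool} {σF τ : LogState A Val M} :
    combine? σC f σF = some τ ↔
      ∀ a, (some (σC a) : TT Val M) *
        listProdAt ((Finset.univ : Finset L).toList.filterMap
          (fun r => (f r).getLeft?)) a * some (σF a) = some (τ a) := by
  set lst := (Finset.univ : Finset L).toList.filterMap (fun r => (f r).getLeft?) with hlst
  show (bigSep lst).bind _ = some τ ↔ _
  constructor
  · intro h a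
    obtain ⟨mid, hmid, h⟩ := Option.bind_eq_some_iff.mp h
    obtain ⟨t, ht, h⟩ := Option.bind_eq_some_iff.mp h
    rw [bigSep_eq_some_iff.mp hmid a, sep_eq_some_iff.mp ht a]
    exact sep_eq_some_iff.mp h a
  · intro h
    have h1 : ∀ a, (some (σC a) : TT Val M) * listProdAt lst a
        = some (Option.join ((some (σC a) : TT Val M) * listProdAt lst a)) :=
      fun a => TT.eq_some_left (h a)
    have h2 : ∀ a, listProdAt lst a = some (Option.join (listProdAt lst a)) :=
      fun a => TT.eq_some_right (h1 a)
    rw [bigSep_eq_some_iff.mpr h2]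
    refine Option.bind_eq_some_iff.mpr ⟨_, rfl, ?_⟩
    have hs1 : sep σC (fun a => Option.join (listProdAt lst a))
        = some (fun a => Option.join
            ((some (σC a) : TT Val M) * listProdAt lst a)) := by
      apply sep_eq_some_iff.mpr
      intro a
      rw [← h2 a]
      exact h1 a
    rw [hs1]
    refine Option.bind_eq_some_iff.mpr ⟨_, rfl, ?_⟩
    apply sep_eq_some_iff.mpr
    intro a
    rw [← h1 a]
    exact h a

lemma combine3?_eq_some_iff {L : Type} [Fintype L] {u : ThreeTriple A Val L M}
    {τ : LogState A Val M} :
    combine3? u = some τ ↔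
      ∀ a, (some (u.1 a) : TT Val M) * some (u.2.1 a) *
        listProdAt ((Finset.univ : Finset L).toList.filterMap
          (fun r => (u.2.2.1 r).getLeft?)) a * some (u.2.2.2 a) = some (τ a) := by
  set lst := (Finset.univ : Finset L).toList.filterMap (fun r => (u.2.2.1 r).getLeft?)
    with hlst
  show (bigSep lst).bind _ = some τ ↔ _
  constructor
  · intro h a
    obtain ⟨mid, hmid, h⟩ := Option.bind_eq_some_iff.mp h
    obtain ⟨s, hs, h⟩ := Option.bind_eq_some_iff.mp h
    obtain ⟨t, ht, h⟩ := Option.bind_eq_some_iff.mp h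
    rw [sep_eq_some_iff.mp hs a, bigSep_eq_some_iff.mp hmid a,
      sep_eq_some_iff.mp ht a]
    exact sep_eq_some_iff.mp h a
  · intro h
    have hA : ∀ a, ((some (u.1 a) : TT Val M) * some (u.2.1 a)) * listProdAt lst a
        = some (Option.join (((some (u.1 a) : TT Val M) * some (u.2.1 a))
            * listProdAt lst a)) := by
      intro a
      exact TT.eq_some_left (h a)
    have hP : ∀ a, listProdAt lst a = some (Option.join (listProdAt lst a)) :=
      fun a => TT.eq_some_right (hA a)
    have hS : ∀ a, (some (u.1 a) : TT Val M) * some (u.2.1 a)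
        = some (Option.join ((some (u.1 a) : TT Val M) * some (u.2.1 a))) :=
      fun a => TT.eq_some_left (hA a)
    rw [bigSep_eq_some_iff.mpr hP]
    refine Option.bind_eq_some_iff.mpr ⟨_, rfl, ?_⟩
    have hs1 : sep u.1 u.2.1 = some (fun a =>
        Option.join ((some (u.1 a) : TT Val M) * some (u.2.1 a))) := by
      apply sep_eq_some_iff.mpr
      intro a
      exact hS a
    rw [hs1]
    refine Option.bind_eq_some_iff.mpr ⟨_, rfl, ?_⟩
    have hs2 : sep (fun a => Option.join ((some (u.1 a) : TT Val M) * some (u.2.1 a)))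
        (fun a => Option.join (listProdAt lst a))
        = some (fun a => Option.join (((some (u.1 a) : TT Val M) * some (u.2.1 a))
            * listProdAt lst a)) := by
      apply sep_eq_some_iff.mpr
      intro a
      rw [← hS a, ← hP a]
      exact hA a
    rw [hs2]
    refine Option.bind_eq_some_iff.mpr ⟨_, rfl, ?_⟩
    apply sep_eq_some_iff.mpr
    intro a
    rw [← hA a]
    exact h a

/-! #### Remapping lemmas -/

lemma remap_inj {s t : LogState A Val M ⊕ Own3}
    (h1 : remap1 s = remap1 t) (h2 : remap2 s = remap2 t) : s = t := by
  rcases s with σ | (_ | _ | _) <;> rcases t with τ | (_ | _ | _) <;>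
    simp_all [remap1, remap2]

lemma getLeft?_remap1 (s : LogState A Val M ⊕ Own3) :
    (remap1 s).getLeft? = s.getLeft? := by
  rcases s with σ | (_ | _ | _) <;> rfl

lemma getLeft?_remap2 (s : LogState A Val M ⊕ Own3) :
    (remap2 s).getLeft? = s.getLeft? := by
  rcases s with σ | (_ | _ | _) <;> rfl

/-! #### Move lemmas (uniform in polarity) -/

variable {I : Type} {L' : Type} [Fintype L']
  {fp : I → SFootprint A L'}
  {mstep : I → ((A → Option Val) × Set L') → ((A → Option Val) × Set L') → Prop}

lemma move_cases {pol : Bool} {m : I} {u v : SepTriple A Val L' M}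
    (h : Move fp mstep pol m u v) :
    EveStep fp mstep m u v ∨ AdamStep fp mstep m u v := by
  unfold Move at h
  split at h
  · exact Or.inl h
  · exact Or.inr h

lemma move_code {pol : Bool} {m : I} {u v : SepTriple A Val L' M}
    (h : Move fp mstep pol m u v) {a : A} (ha : a ∉ (fp m).wr) :
    u.1 a = v.1 a := by
  rcases move_cases h with h | h
  · exact h.2.2.1 a ha
  · exact congrFun h.1 a

lemma move_frame {pol : Bool} {m : I} {u v : SepTriple A Val L' M}
    (h : Move fp mstep pol m u v) {a : A} (ha : a ∉ (fp m).wr) :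
    u.2.2 a = v.2.2 a := by
  rcases move_cases h with h | h
  · exact congrFun h.1 a
  · exact h.2.2.1 a ha

lemma move_lock {pol : Bool} {m : I} {u v : SepTriple A Val L' M}
    (h : Move fp mstep pol m u v) {r : L'} (hr : r ∉ (fp m).lock) :
    u.2.1 r = v.2.1 r := by
  rcases move_cases h with h | h
  · exact h.2.2.2.2.2 r hr
  · exact h.2.2.2.2.2 r hr

lemma move_combines {pol : Bool} {m : I} {u v : SepTriple A Val L' M}
    (h : Move fp mstep pol m u v) :
    ∃ τ, combine? v.1 v.2.1 v.2.2 = some τ := by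
  rcases move_cases h with h | h <;>
  · obtain ⟨ms, ms', _, hc, _⟩ := h.2.1
    obtain ⟨τ, hτ, _⟩ := hc
    exact ⟨τ, hτ⟩

end Aux
/-- Given two tiles over separated states whose upper paths are compatible
(same instruction labels, dual polarities, and pointwise compatible states),
the middle states of the lower paths are again compatible — hence the lower
paths define a path in the parallel product `G₁ ∥ G₂`. -/
theorem stmt17 {A Val L I : Type} [Fintype L] {M : PCM}
    (fp : I → SFootprint A L)
    (mstep : I → ((A → Option Val) × Set L) → ((A → Option Val) × Set L) → Prop)
    (pol pol' : Bool) (m m' : I)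
    (x₁ y₁ z₁ y₁' x₂ y₂ z₂ y₂' : SepTriple A Val L M)
    (t₁ : STile fp mstep pol pol' m m' x₁ y₁ z₁ y₁')
    (t₂ : STile fp mstep (!pol) (!pol') m m' x₂ y₂ z₂ y₂')
    (cx : Compatible x₁ x₂) (cy : Compatible y₁ y₂) (cz : Compatible z₁ z₂) :
    Compatible y₁' y₂' := by
  classical
  obtain ⟨mv1xy, mv1yz, mv1xy', mv1y'z, ind⟩ := t₁
  obtain ⟨mv2xy, mv2yz, mv2xy', mv2y'z, -⟩ := t₂
  obtain ⟨wx, -, ⟨e1x, e2x, e3x⟩, ⟨f1x, f2x, f3x⟩⟩ := cx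
  obtain ⟨wz, -, ⟨e1z, e2z, e3z⟩, ⟨f1z, f2z, f3z⟩⟩ := cz
  have hwr : ∀ a, a ∈ (fp m').wr → a ∉ (fp m).wr := by
    intro a ha hb
    have h := ind.2.1
    rw [Set.eq_empty_iff_forall_notMem] at h
    exact h a ⟨Or.inr ha, hb⟩
  have hlk : ∀ r, r ∈ (fp m').lock → r ∉ (fp m).lock := by
    intro r ha hb
    have h := ind.2.2.1
    rw [Set.eq_empty_iff_forall_notMem] at h
    exact h r ⟨hb, ha⟩
  set ℓ : L → LogState A Val M ⊕ Own3 :=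
    fun r => if r ∈ (fp m').lock then wz.2.2.1 r else wx.2.2.1 r with hℓ
  set σF : LogState A Val M :=
    fun a => if a ∈ (fp m').wr then wz.2.2.2 a else wx.2.2.2 a with hσF
  -- pointwise component equalities for the lower-path middle states
  have cz1 : ∀ a ∈ (fp m').wr, y₁'.2.2 a = z₁.2.2 a :=
    fun a ha => move_frame mv1y'z (hwr a ha)
  have cz2 : ∀ a ∈ (fp m').wr, y₂'.1 a = z₂.1 a :=
    fun a ha => move_code mv2y'z (hwr a ha)
  have cz3 : ∀ a ∈ (fp m').wr, y₁'.1 a = z₁.1 a :=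
    fun a ha => move_code mv1y'z (hwr a ha)
  have cz4 : ∀ a ∈ (fp m').wr, y₂'.2.2 a = z₂.2.2 a :=
    fun a ha => move_frame mv2y'z (hwr a ha)
  have cx1 : ∀ a, a ∉ (fp m').wr → y₁'.2.2 a = x₁.2.2 a :=
    fun a ha => (move_frame mv1xy' ha).symm
  have cx2 : ∀ a, a ∉ (fp m').wr → y₂'.1 a = x₂.1 a :=
    fun a ha => (move_code mv2xy' ha).symm
  have cx3 : ∀ a, a ∉ (fp m').wr → y₁'.1 a = x₁.1 a :=
    fun a ha => (move_code mv1xy' ha).symm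
  have cx4 : ∀ a, a ∉ (fp m').wr → y₂'.2.2 a = x₂.2.2 a :=
    fun a ha => (move_frame mv2xy' ha).symm
  -- lock-state agreement
  have lco1 : ∀ r, y₁'.2.1 r = remap1 (ℓ r) := by
    intro r
    by_cases hr : r ∈ (fp m').lock
    · rw [move_lock mv1y'z (hlk r hr), congrFun e2z r]
      simp only [hℓ, if_pos hr]
    · rw [← move_lock mv1xy' hr, congrFun e2x r]
      simp only [hℓ, if_neg hr]
  have lco2 : ∀ r, y₂'.2.1 r = remap2 (ℓ r) := by
    intro r
    by_cases hr : r ∈ (fp m').lock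
    · rw [move_lock mv2y'z (hlk r hr), congrFun f2z r]
      simp only [hℓ, if_pos hr]
    · rw [← move_lock mv2xy' hr, congrFun f2x r]
      simp only [hℓ, if_neg hr]
  -- the frame part separates correctly
  have e3xp := sep_eq_some_iff.mp e3x
  have e3zp := sep_eq_some_iff.mp e3z
  have f3xp := sep_eq_some_iff.mp f3x
  have f3zp := sep_eq_some_iff.mp f3z
  have sep1pt : ∀ a, (some (σF a) : TT Val M) * some (y₂'.1 a)
      = some (y₁'.2.2 a) := by
    intro a
    by_cases ha : a ∈ (fp m').wr
    · simp only [hσF, if_pos ha]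
      rw [cz2 a ha, cz1 a ha, f1z]
      exact e3zp a
    · simp only [hσF, if_neg ha]
      rw [cx2 a ha, cx1 a ha, f1x]
      exact e3xp a
  have sep2pt : ∀ a, (some (σF a) : TT Val M) * some (y₁'.1 a)
      = some (y₂'.2.2 a) := by
    intro a
    by_cases ha : a ∈ (fp m').wr
    · simp only [hσF, if_pos ha]
      rw [cz3 a ha, cz4 a ha, e1z]
      exact f3zp a
    · simp only [hσF, if_neg ha]
      rw [cx3 a ha, cx4 a ha, e1x]
      exact f3xp a
  -- definedness of the three-party combination
  obtain ⟨τ, hτ⟩ := move_combines mv1xy'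
  have hpt := combine?_eq_some_iff.mp hτ
  have hlist : ((Finset.univ : Finset L).toList.filterMap
        (fun r => (y₁'.2.1 r).getLeft?))
      = ((Finset.univ : Finset L).toList.filterMap
        (fun r => (ℓ r).getLeft?)) := by
    have h : (fun r => (y₁'.2.1 r).getLeft?) = fun r => (ℓ r).getLeft? := by
      funext r
      rw [lco1 r, getLeft?_remap1]
    rw [h]
  have hre : ∀ X Y P F : TT Val M, X * Y * P * F = X * P * (F * Y) := by
    intro X Y P F
    rw [mul_comm F Y, ← mul_assoc, mul_right_comm X Y P]
  refine ⟨(y₁'.1, y₂'.1, ℓ, σF), ?_, ⟨rfl, ?_, ?_⟩, ⟨rfl, ?_, ?_⟩⟩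
  · rw [Option.isSome_iff_exists]
    refine ⟨τ, combine3?_eq_some_iff.mpr ?_⟩
    intro a
    show (some (y₁'.1 a) : TT Val M) * some (y₂'.1 a) *
        listProdAt ((Finset.univ : Finset L).toList.filterMap
          (fun r => (ℓ r).getLeft?)) a * some (σF a) = some (τ a)
    have h := hpt a
    rw [hlist, ← sep1pt a] at h
    rw [hre]
    exact h
  · funext r
    exact lco1 r
  · exact sep_eq_some_iff.mpr sep1pt
  · funext r
    exact lco2 r
  · exact sep_eq_some_iff.mpr sep2pt
end
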